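/- If G is a bipartite simple graph (with at least one edge), then μ_int(G) ≤ ⌈Δ(G)/3⌉, where Δ(G) is the maximum degree of G. -/

import Mathlib

open SimpleGraph

/-- The set ("spectrum") of colors appearing on edges incident to vertex `v`
under the edge coloring `c`. -/
def SimpleGraph.colorSpectrum {V : Type*} (G : SimpleGraph V) (c : Sym2 V → ℕ) (v : V) :
    Set ℕ :=
  {n | ∃ w, G.Adj v w ∧ c s(v, w) = n}

/-- A set of natural numbers is an interval of consecutive integers. -/
def IsIntervalSet (S : Set ℕ) : Prop :=
  ∀ a ∈ S, ∀ b ∈ S, ∀ x, a ≤ x → x ≤ b → x ∈ S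

/-- `c` is a `k`-improper interval edge coloring of `G`: at most `k` edges with a common
endpoint share a color, and the colors at each vertex form an interval. -/
def SimpleGraph.IsImproperIntervalColoring {V : Type*} (G : SimpleGraph V)
    (c : Sym2 V → ℕ) (k : ℕ) : Prop :=
  (∀ v n, {w | G.Adj v w ∧ c s(v, w) = n}.ncard ≤ k) ∧
    ∀ v, IsIntervalSet (G.colorSpectrum c v)

/-- The interval coloring impropriety of `G`: the least `k` such that `G` has a
`k`-improper interval edge coloring. -/
noncomputable def SimpleGraph.muInt {V : Type*} (G : SimpleGraph V) : ℕ :=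
  sInf {k | ∃ c : Sym2 V → ℕ, G.IsImproperIntervalColoring c k}


open Finset
set_option linter.unusedSectionVars false
set_option maxHeartbeats 1000000

namespace IntervalAux



variable {V : Type*} [Fintype V] [DecidableEq V]
variable (G : SimpleGraph V) [DecidableRel G.Adj] (p : V → Bool)

def od (g : Sym2 V → Bool) (v : V) : ℕ :=
  ((G.neighborFinset v).filter fun w => g s(v, w) = p v).card

def ind (g : Sym2 V → Bool) (v : V) : ℕ :=
  ((G.neighborFinset v).filter fun w => ¬ (g s(v, w) = p v)).card

lemma od_add_ind (g : Sym2 V → Bool) (v : V) :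
    od G p g v + ind G p g v = G.degree v := by
  classical
  rw [od, ind, Finset.card_filter_add_card_filter_not]
  rfl

def step (g : Sym2 V → Bool) (u v : V) : Prop :=
  G.Adj u v ∧ g s(u, v) = p u

section Flip

variable {G p}

/-- flipping a single directed edge `u → w`. -/
lemma od_update (hp : ∀ {u v : V}, G.Adj u v → p u ≠ p v)
    (g : Sym2 V → Bool) {u w : V} (huw : G.Adj u w)
    (hdir : g s(u, w) = p u) :
    let g' := Function.update g s(u, w) (!g s(u, w))
    (od G p g' u + 1 = od G p g u) ∧ (od G p g' w = od G p g w + 1) ∧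
      (∀ z, z ≠ u → z ≠ w → od G p g' z = od G p g z) := by
  intro g'
  have hpw : p w = !p u := Bool.eq_not_iff.mpr fun h => hp huw h.symm
  have hval : g' s(u, w) = !p u := by
    simp only [g', Function.update_self, hdir]
  refine ⟨?_, ?_, ?_⟩
  · -- at u : w leaves the filter
    have hfil : ((G.neighborFinset u).filter fun x => g' s(u, x) = p u)
        = ((G.neighborFinset u).filter fun x => g s(u, x) = p u).erase w := by
      ext x
      simp only [mem_filter, mem_erase, SimpleGraph.mem_neighborFinset]
      constructor
      · rintro ⟨hadj, hgx⟩
        rcases eq_or_ne x w with rfl | hxw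
        · rw [hval] at hgx
          simp at hgx
        · have hne : s(u, x) ≠ s(u, w) := fun h => hxw (Sym2.congr_right.mp h)
          refine ⟨hxw, hadj, ?_⟩
          rwa [show g' s(u, x) = g s(u, x) from Function.update_of_ne hne _ g] at hgx
      · rintro ⟨hxw, hadj, hgx⟩
        have hne : s(u, x) ≠ s(u, w) := fun h => hxw (Sym2.congr_right.mp h)
        refine ⟨hadj, ?_⟩
        rwa [show g' s(u, x) = g s(u, x) from Function.update_of_ne hne _ g]
    have hwmem : w ∈ ((G.neighborFinset u).filter fun x => g s(u, x) = p u) := by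
      simp [huw, hdir]
    rw [od, od, hfil, card_erase_of_mem hwmem]
    have : 0 < ((G.neighborFinset u).filter fun x => g s(u, x) = p u).card :=
      card_pos.mpr ⟨w, hwmem⟩
    omega
  · -- at w : u joins the filter
    have hswap : s(u, w) = s(w, u) := Sym2.eq_swap
    have key : ∀ x, x ≠ u → g' s(w, x) = g s(w, x) := by
      intro x hxu
      refine Function.update_of_ne ?_ _ g
      rw [hswap]
      exact fun h => hxu (Sym2.congr_right.mp h)
    have hfil : ((G.neighborFinset w).filter fun x => g' s(w, x) = p w)
        = insert u ((G.neighborFinset w).filter fun x => g s(w, x) = p w) := by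
      ext x
      simp only [mem_filter, mem_insert, SimpleGraph.mem_neighborFinset]
      constructor
      · rintro ⟨hadj, hgx⟩
        rcases eq_or_ne x u with rfl | hxu
        · exact Or.inl rfl
        · exact Or.inr ⟨hadj, by rwa [key x hxu] at hgx⟩
      · rintro (rfl | ⟨hadj, hgx⟩)
        · refine ⟨huw.symm, ?_⟩
          rw [← hswap, hval, hpw]
        · rcases eq_or_ne x u with rfl | hxu
          · rw [← hswap, hdir] at hgx
            exact absurd hgx (hp huw)
          · exact ⟨hadj, by rwa [key x hxu]⟩
    have humem : u ∉ ((G.neighborFinset w).filter fun x => g s(w, x) = p w) := by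
      simp only [mem_filter, SimpleGraph.mem_neighborFinset]
      rintro ⟨-, hgx⟩
      rw [← hswap, hdir] at hgx
      exact hp huw hgx
    rw [od, od, hfil, card_insert_of_notMem humem]
  · intro z hzu hzw
    rw [od, od]
    congr 1
    apply filter_congr
    intro x hx
    have hne : s(z, x) ≠ s(u, w) := by
      intro h
      have : z ∈ s(u, w) := h ▸ (Sym2.mem_mk_left z x)
      rcases Sym2.mem_iff.mp this with rfl | rfl
      · exact hzu rfl
      · exact hzw rfl
    rw [show g' s(z, x) = g s(z, x) from Function.update_of_ne hne _ g]

end Flip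



/-- From any chain we can extract a duplicate-free chain with the same endpoints. -/
lemma exists_nodup_chain {α : Type*} {r : α → α → Prop} :
    ∀ (l : List α) (a : α), List.Chain r a l →
      ∃ l' : List α, List.Chain r a l' ∧ (a :: l').getLast? = (a :: l).getLast?
        ∧ (a :: l').Nodup ∧ (∀ x ∈ l', x ∈ l) := by
  intro l
  induction l with
  | nil => intro a _; exact ⟨[], List.Chain.nil, rfl, List.nodup_singleton a, by simp⟩
  | cons c t ih =>
    intro a hch
    have hac : r a c := (List.chain_cons.mp hch).1
    have hct : List.Chain r c t := (List.chain_cons.mp hch).2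
    obtain ⟨l'', hch'', hlast'', hnd'', hsub''⟩ := ih c hct
    have hsubc : ∀ x ∈ c :: l'', x ∈ c :: t := by
      intro x hx
      rcases List.mem_cons.mp hx with rfl | hx'
      · exact List.mem_cons_self
      · exact List.mem_cons_of_mem _ (hsub'' x hx')
    by_cases hmem : a ∈ c :: l''
    · -- cut : take the suffix of (c :: l'') starting at a
      obtain ⟨s, t', hst⟩ := List.append_of_mem hmem
      have hchain_all : List.Chain' r (c :: l'') := hch''
      have hsuffix : List.Chain' r (a :: t') := by
        apply hchain_all.suffix
        rw [hst]
        exact ⟨s, rfl⟩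
      have hnds : (a :: t').Nodup := by
        have : (a :: t') <:+ (c :: l'') := ⟨s, hst.symm⟩
        exact hnd''.sublist this.sublist
      have hlast : (a :: t').getLast? = (c :: l'').getLast? := by
        rw [hst, List.getLast?_append_of_ne_nil s (by simp)]
      have hchain : List.Chain r a t' := hsuffix
      refine ⟨t', hchain, ?_, hnds, ?_⟩
      · rw [hlast, hlast'', List.getLast?_cons_cons]
      · intro x hx
        have : x ∈ c :: l'' := by
          rw [hst]; exact List.mem_append_right s (List.mem_cons_of_mem a hx)
        exact hsubc x this
    · refine ⟨c :: l'', List.chain_cons.mpr ⟨hac, hch''⟩, ?_, ?_, hsubc⟩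
      · rw [List.getLast?_cons_cons, List.getLast?_cons_cons]
        exact hlast''
      · exact List.nodup_cons.mpr ⟨hmem, hnd''⟩



lemma chain_congr {α : Type*} {r r' : α → α → Prop} :
    ∀ (l : List α) (a : α), (∀ x y, x ∈ a :: l → y ∈ a :: l → r x y → r' x y) →
      List.Chain r a l → List.Chain r' a l := by
  intro l
  induction l with
  | nil => intro a _ _; exact List.Chain.nil
  | cons c t ih =>
    intro a hiff hch
    rcases List.chain_cons.mp hch with ⟨hac, hct⟩
    refine List.chain_cons.mpr ⟨hiff a c (by simp) (by simp) hac, ?_⟩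
    exact ih c (fun x y hx hy => hiff x y (List.mem_cons_of_mem _ hx)
      (List.mem_cons_of_mem _ hy)) hct

lemma mem_of_getLast? {α : Type*} {l : List α} {u : α} (h : l.getLast? = some u) : u ∈ l := by
  rcases l with _ | ⟨a, t⟩
  · simp at h
  · have : (a :: t).getLast (by simp) ∈ a :: t := List.getLast_mem _
    rw [List.getLast?_eq_getLast_of_ne_nil (by simp), Option.some_inj] at h
    exact h ▸ this


section Flip2

variable {V : Type*} [Fintype V] [DecidableEq V]
variable {G : SimpleGraph V} [DecidableRel G.Adj] {p : V → Bool}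

/-- Reversing a directed (nodup) path from `v` to `u` decreases `od v` by one,
increases `od u` by one, and keeps all other out-degrees. -/
lemma flip_path (hp : ∀ {u v : V}, G.Adj u v → p u ≠ p v) :
    ∀ (l : List V) (v : V) (g : Sym2 V → Bool),
      List.Chain (step G p g) v l → l ≠ [] → (v :: l).Nodup →
      ∀ u, (v :: l).getLast? = some u →
      ∃ g', (od G p g' v + 1 = od G p g v) ∧ (od G p g' u = od G p g u + 1) ∧
        ∀ z, z ≠ v → z ≠ u → od G p g' z = od G p g z := by
  intro l
  induction l with
  | nil => intro v g _ hne _ _ _; exact absurd rfl hne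
  | cons c t ih =>
    intro v g hch hne hnd u hu
    rcases List.chain_cons.mp hch with ⟨⟨hadj, hdir⟩, hct⟩
    obtain ⟨h1, h2, h3⟩ := od_update hp g hadj hdir
    set g₁ := Function.update g s(v, c) (!g s(v, c)) with hg₁
    have hvnot : v ∉ c :: t := (List.nodup_cons.mp hnd).1
    rcases t with _ | ⟨e, t'⟩
    · -- single edge
      have : u = c := by
        rw [List.getLast?_cons_cons] at hu
        simpa using hu.symm
      subst this
      exact ⟨g₁, h1, h2, h3⟩
    · -- longer path
      have hchain₁ : List.Chain (step G p g₁) c (e :: t') := by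
        apply chain_congr _ _ _ hct
        intro x y hx hy hr
        refine ⟨hr.1, ?_⟩
        have hne2 : s(x, y) ≠ s(v, c) := by
          intro hxy
          have : v ∈ s(x, y) := hxy ▸ (Sym2.mem_mk_left v c)
          rcases Sym2.mem_iff.mp this with rfl | rfl
          · exact hvnot hx
          · exact hvnot hy
        rw [hg₁, Function.update_of_ne hne2 _ g]
        exact hr.2
      have hu' : (c :: e :: t').getLast? = some u := by
        rw [List.getLast?_cons_cons] at hu
        exact hu
      obtain ⟨g₂, k1, k2, k3⟩ := ih c g₁ hchain₁ (by simp)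
        (List.nodup_cons.mp hnd).2 u hu'
      have humem : u ∈ e :: t' := by
        have := mem_of_getLast? hu'
        rcases List.mem_cons.mp this with rfl | h
        · -- u = c : impossible since getLast? of (c :: e :: t') = getLast? (e :: t') ∈ e::t'
          rw [List.getLast?_cons_cons] at hu'
          exact mem_of_getLast? hu'
        · exact h
      have hucne : u ≠ c := by
        intro h
        subst h
        exact ((List.nodup_cons.mp (List.nodup_cons.mp hnd).2).1) humem
      have huvne : u ≠ v := by
        intro h
        subst h
        exact hvnot (List.mem_cons_of_mem _ humem)
      refine ⟨g₂, ?_, ?_, ?_⟩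
      · have : od G p g₂ v = od G p g₁ v := k3 v (fun h => (List.nodup_cons.mp hnd).1
          (h ▸ List.mem_cons_self)) (fun h => huvne h.symm)
        omega
      · have : od G p g₁ u = od G p g u := h3 u huvne hucne
        omega
      · intro z hzv hzu
        rcases eq_or_ne z c with rfl | hzc
        · omega
        · rw [k3 z hzc hzu, h3 z hzv hzc]

end Flip2

section Engine

variable {V : Type*} [Fintype V] [DecidableEq V]
variable {G : SimpleGraph V} [DecidableRel G.Adj] {p : V → Bool}

lemma sum_od_le (hp : ∀ {u v : V}, G.Adj u v → p u ≠ p v) (g : Sym2 V → Bool)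
    (R : Finset V) (hR : ∀ u ∈ R, ∀ w, step G p g u w → w ∈ R) (s : Bool) :
    ∑ v ∈ R, od G p g v ≤
      ∑ x ∈ R.filter (fun x => p x = s), G.degree x := by
  classical
  have hT : ∑ v ∈ R, od G p g v =
      (R.biUnion (fun v => ({v} : Finset V) ×ˢ
        ((G.neighborFinset v).filter fun w => g s(v, w) = p v))).card := by
    rw [card_biUnion]
    · apply sum_congr rfl
      intro v _
      rw [card_product, card_singleton, one_mul]
      rfl
    · intro x _ y _ hxy
      simp only [Finset.disjoint_left, mem_product, mem_singleton]
      rintro ⟨a, b⟩ ⟨rfl, -⟩ ⟨rfl, -⟩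
      exact hxy rfl
  have hT' : ∑ x ∈ R.filter (fun x => p x = s), G.degree x =
      ((R.filter (fun x => p x = s)).biUnion
        (fun x => ({x} : Finset V) ×ˢ G.neighborFinset x)).card := by
    rw [card_biUnion]
    · apply sum_congr rfl
      intro v _
      rw [card_product, card_singleton, one_mul]
      rfl
    · intro x _ y _ hxy
      simp only [Finset.disjoint_left, mem_product, mem_singleton]
      rintro ⟨a, b⟩ ⟨rfl, -⟩ ⟨rfl, -⟩
      exact hxy rfl
  rw [hT, hT']
  apply card_le_card_of_injOn (fun q => if p q.1 = s then q else q.swap)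
  · intro q hq
    simp only [mem_coe, mem_biUnion, mem_product, mem_singleton] at hq
    obtain ⟨v, hvR, hq1, hq2⟩ := hq
    subst hq1
    rw [mem_filter, SimpleGraph.mem_neighborFinset] at hq2
    by_cases hs : p q.1 = s
    · simp only [if_pos hs, mem_coe, mem_biUnion, mem_product, mem_singleton, mem_filter]
      exact ⟨q.1, ⟨hvR, hs⟩, rfl, by rw [SimpleGraph.mem_neighborFinset]; exact hq2.1⟩
    · simp only [if_neg hs, mem_coe, mem_biUnion, mem_product, mem_singleton, mem_filter]
      have hq2R : q.2 ∈ R := hR q.1 hvR q.2 ⟨hq2.1, hq2.2⟩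
      have hps : p q.2 = s := by
        have h12 := hp hq2.1
        revert h12 hs
        cases p q.1 <;> cases p q.2 <;> cases s <;> simp
      exact ⟨q.2, ⟨hq2R, hps⟩, rfl, by
        rw [SimpleGraph.mem_neighborFinset]; exact hq2.1.symm⟩
  · intro q hq q' hq' heq
    simp only [mem_coe, mem_biUnion, mem_product, mem_singleton] at hq hq'
    obtain ⟨v, hvR, hq1, hq2⟩ := hq
    obtain ⟨v', hvR', hq1', hq2'⟩ := hq'
    subst hq1; subst hq1'
    rw [mem_filter, SimpleGraph.mem_neighborFinset] at hq2 hq2'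
    simp only at heq
    by_cases h1 : p q.1 = s <;> by_cases h2 : p q'.1 = s
    · rwa [if_pos h1, if_pos h2] at heq
    · rw [if_pos h1, if_neg h2] at heq
      exfalso
      have h12 : q = (q'.2, q'.1) := by rw [heq]; rfl
      have hedge : s(q'.1, q'.2) = s(q'.2, q'.1) := Sym2.eq_swap
      have := hq2.2
      rw [h12] at this
      simp only at this
      rw [← hedge] at this
      rw [hq2'.2] at this
      exact hp hq2'.1 this
    · rw [if_neg h1, if_pos h2] at heq
      exfalso
      have h12 : q' = (q.2, q.1) := by rw [← heq]; rfl
      have hedge : s(q.1, q.2) = s(q.2, q.1) := Sym2.eq_swap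
      have := hq2'.2
      rw [h12] at this
      simp only at this
      rw [← hedge] at this
      rw [hq2.2] at this
      exact hp hq2.1 this
    · rw [if_neg h1, if_neg h2] at heq
      exact Prod.swap_injective heq


/-- penalty of a vertex -/
def pen (co ci : V → ℕ) (g : Sym2 V → Bool) (v : V) : ℕ :=
  (od G p g v - co v) + (ind G p g v - ci v)

def Phi (co ci : V → ℕ) (g : Sym2 V → Bool) : ℕ :=
  ∑ v, pen (G := G) (p := p) co ci g v

lemma no_out_violation (hp : ∀ {u v : V}, G.Adj u v → p u ≠ p v) (co ci : V → ℕ)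
    (hdc : ∀ v, G.degree v ≤ co v + ci v)
    (hcap : ∀ R : Finset V,
      min (∑ x ∈ R.filter (fun x => p x = true), G.degree x)
        (∑ x ∈ R.filter (fun x => p x = false), G.degree x) ≤ ∑ x ∈ R, co x)
    (g : Sym2 V → Bool)
    (hmin : ∀ g', Phi (G := G) (p := p) co ci g ≤ Phi (G := G) (p := p) co ci g')
    (v : V) : od G p g v ≤ co v := by
  classical
  by_contra hviol
  push_neg at hviol
  set R := univ.filter (fun u => Relation.ReflTransGen (step G p g) v u) with hRdef
  have hvR : v ∈ R := by
    simp only [hRdef, mem_filter, mem_univ, true_and]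
    exact Relation.ReflTransGen.refl
  have hclosed : ∀ u ∈ R, ∀ w, step G p g u w → w ∈ R := by
    intro u hu w hw
    simp only [hRdef, mem_filter, mem_univ, true_and] at hu ⊢
    exact hu.tail hw
  have hexists : ∃ u ∈ R, od G p g u < co u := by
    by_contra hall
    push_neg at hall
    have hlt : ∑ x ∈ R, co x < ∑ x ∈ R, od G p g x :=
      sum_lt_sum (fun i hi => hall i hi) ⟨v, hvR, hviol⟩
    have h1 := sum_od_le hp g R hclosed true
    have h2 := sum_od_le hp g R hclosed false
    exact absurd (le_trans (le_min h1 h2) (hcap R)) (not_le.mpr hlt)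
  obtain ⟨u, huR, hu⟩ := hexists
  have hneuv : u ≠ v := by
    rintro rfl
    omega
  have hrt : Relation.ReflTransGen (step G p g) v u := by
    simpa only [hRdef, mem_filter, mem_univ, true_and] using huR
  obtain ⟨l, hch, hlast⟩ := List.exists_isChain_cons_of_relationReflTransGen hrt
  have hlast? : (v :: l).getLast? = some u := by
    rw [List.getLast?_eq_getLast_of_ne_nil (by simp), hlast]
  obtain ⟨l', hch', hlast', hnd', -⟩ := exists_nodup_chain l v hch
  have hlne : l' ≠ [] := by
    rintro rfl
    rw [hlast?] at hlast'
    simp only [List.getLast?_singleton, Option.some_inj] at hlast'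
    exact hneuv hlast'.symm
  obtain ⟨g', o1, o2, o3⟩ := flip_path hp l' v g hch' hlne hnd' u (by rw [hlast', hlast?])
  have hcontra : Phi (G := G) (p := p) co ci g' < Phi (G := G) (p := p) co ci g := by
    apply sum_lt_sum
    · intro i _
      have hoi := od_add_ind G p g i
      have hoi' := od_add_ind G p g' i
      rcases eq_or_ne i v with rfl | hiv
      · unfold pen
        have := hdc i
        omega
      · rcases eq_or_ne i u with rfl | hiu
        · unfold pen
          omega
        · have := o3 i hiv hiu
          unfold pen
          omega
    · refine ⟨v, mem_univ v, ?_⟩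
      have hoi := od_add_ind G p g v
      have hoi' := od_add_ind G p g' v
      have := hdc v
      unfold pen
      omega
  exact absurd (hmin g') (not_le.mpr hcontra)

lemma od_not (g : Sym2 V → Bool) (v : V) :
    od G (fun x => !(p x)) g v = ind G p g v := by
  unfold od ind
  congr 1
  apply filter_congr
  intro w _
  cases hgw : g s(v, w) <;> cases hpv : p v <;> simp [hgw, hpv]

lemma ind_not (g : Sym2 V → Bool) (v : V) :
    ind G (fun x => !(p x)) g v = od G p g v := by
  unfold od ind
  congr 1
  apply filter_congr
  intro w _
  cases hgw : g s(v, w) <;> cases hpv : p v <;> simp [hgw, hpv]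

lemma mainSplit (hp : ∀ {u v : V}, G.Adj u v → p u ≠ p v) (a b : ℕ)
    (hdeg : ∀ v, G.degree v ≤ a + b) :
    ∃ g : Sym2 V → Bool, ∀ v,
      ((G.neighborFinset v).filter fun w => g s(v, w) = true).card ≤ a ∧
      ((G.neighborFinset v).filter fun w => g s(v, w) = false).card ≤ b := by
  classical
  set co : V → ℕ := fun v => if p v then a else b with hco
  set ci : V → ℕ := fun v => if p v then b else a with hci
  have hsum : ∀ (R : Finset V) (c₁ c₂ : ℕ),
      min (∑ x ∈ R.filter (fun x => p x = true), G.degree x)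
        (∑ x ∈ R.filter (fun x => p x = false), G.degree x) ≤
      c₁ * (R.filter (fun x => p x = true)).card +
        c₂ * (R.filter (fun x => p x = false)).card →
      True := fun _ _ _ _ => trivial
  -- bound on one side sums
  have hside : ∀ (R : Finset V) (s : Bool),
      ∑ x ∈ R.filter (fun x => p x = s), G.degree x ≤
        (a + b) * (R.filter (fun x => p x = s)).card := by
    intro R s
    calc ∑ x ∈ R.filter (fun x => p x = s), G.degree x
        ≤ ∑ _x ∈ R.filter (fun x => p x = s), (a + b) :=
          sum_le_sum (fun i _ => hdeg i)
      _ = (R.filter (fun x => p x = s)).card * (a + b) := by rw [sum_const, smul_eq_mul]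
      _ = (a + b) * (R.filter (fun x => p x = s)).card := mul_comm _ _
  have efalse : ∀ R : Finset V, R.filter (fun x => ¬ (p x = true)) =
      R.filter (fun x => p x = false) := by
    intro R; apply filter_congr; intro x _; cases p x <;> simp
  have hcosum : ∀ R : Finset V, ∑ x ∈ R, co x =
      a * (R.filter (fun x => p x = true)).card + b * (R.filter (fun x => p x = false)).card := by
    intro R
    rw [← sum_filter_add_sum_filter_not R (fun x => p x = true), efalse]
    congr 1
    · rw [sum_congr rfl (fun x hx => show co x = a by
        rw [hco]; simp [(mem_filter.mp hx).2]), sum_const, smul_eq_mul, mul_comm]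
    · rw [sum_congr rfl (fun x hx => show co x = b by
        rw [hco]; simp [(mem_filter.mp hx).2]), sum_const, smul_eq_mul, mul_comm]
  have hcisum : ∀ R : Finset V, ∑ x ∈ R, ci x =
      b * (R.filter (fun x => p x = true)).card + a * (R.filter (fun x => p x = false)).card := by
    intro R
    rw [← sum_filter_add_sum_filter_not R (fun x => p x = true), efalse]
    congr 1
    · rw [sum_congr rfl (fun x hx => show ci x = b by
        rw [hci]; simp [(mem_filter.mp hx).2]), sum_const, smul_eq_mul, mul_comm]
    · rw [sum_congr rfl (fun x hx => show ci x = a by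
        rw [hci]; simp [(mem_filter.mp hx).2]), sum_const, smul_eq_mul, mul_comm]
  have hcap : ∀ R : Finset V,
      min (∑ x ∈ R.filter (fun x => p x = true), G.degree x)
        (∑ x ∈ R.filter (fun x => p x = false), G.degree x) ≤ ∑ x ∈ R, co x := by
    intro R
    rw [hcosum R]
    set c₁ := (R.filter (fun x => p x = true)).card
    set c₂ := (R.filter (fun x => p x = false)).card
    rcases le_total c₁ c₂ with h | h
    · calc min _ _ ≤ (a + b) * c₁ := le_trans (min_le_left _ _) (hside R true)
        _ = a * c₁ + b * c₁ := by ring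
        _ ≤ a * c₁ + b * c₂ := by
            have := Nat.mul_le_mul_left b h
            omega
    · calc min _ _ ≤ (a + b) * c₂ := le_trans (min_le_right _ _) (hside R false)
        _ = a * c₂ + b * c₂ := by ring
        _ ≤ a * c₁ + b * c₂ := by
            have := Nat.mul_le_mul_left a h
            omega
  have hcap' : ∀ R : Finset V,
      min (∑ x ∈ R.filter (fun x => (!(p x)) = true), G.degree x)
        (∑ x ∈ R.filter (fun x => (!(p x)) = false), G.degree x) ≤ ∑ x ∈ R, ci x := by
    intro R
    have e1 : R.filter (fun x => (!(p x)) = true) = R.filter (fun x => p x = false) := by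
      apply filter_congr; intro x _; cases p x <;> simp
    have e2 : R.filter (fun x => (!(p x)) = false) = R.filter (fun x => p x = true) := by
      apply filter_congr; intro x _; cases p x <;> simp
    rw [e1, e2, hcisum R, min_comm]
    set c₁ := (R.filter (fun x => p x = true)).card
    set c₂ := (R.filter (fun x => p x = false)).card
    rcases le_total c₁ c₂ with h | h
    · calc min _ _ ≤ (a + b) * c₁ := le_trans (min_le_left _ _) (hside R true)
        _ = b * c₁ + a * c₁ := by ring
        _ ≤ b * c₁ + a * c₂ := by
            have := Nat.mul_le_mul_left a h
            omega
    · calc min _ _ ≤ (a + b) * c₂ := le_trans (min_le_right _ _) (hside R false)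
        _ = b * c₂ + a * c₂ := by ring
        _ ≤ b * c₁ + a * c₂ := by
            have := Nat.mul_le_mul_left b h
            omega
  obtain ⟨g₀, -, hg₀⟩ := Finset.exists_min_image (univ : Finset (Sym2 V → Bool))
    (fun g => Phi (G := G) (p := p) co ci g) univ_nonempty
  have hmin : ∀ g', Phi (G := G) (p := p) co ci g₀ ≤ Phi (G := G) (p := p) co ci g' :=
    fun g' => hg₀ g' (mem_univ _)
  have hdc : ∀ v, G.degree v ≤ co v + ci v := by
    intro v
    have := hdeg v
    simp only [hco, hci]
    cases hpv : p v <;> simp only [hpv, if_true, if_false, Bool.false_eq_true] <;> omega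
  have hdc' : ∀ v, G.degree v ≤ ci v + co v := by
    intro v
    have := hdc v
    omega
  have hout : ∀ v, od G p g₀ v ≤ co v :=
    no_out_violation hp co ci hdc hcap g₀ hmin
  have hp' : ∀ {u v : V}, G.Adj u v → (!(p u)) ≠ (!(p v)) := by
    intro u v huv h
    exact hp huv (by simpa using h)
  have hPhiEq : ∀ g, Phi (G := G) (p := fun x => !(p x)) ci co g =
      Phi (G := G) (p := p) co ci g := by
    intro g
    unfold Phi
    apply sum_congr rfl
    intro v _
    unfold pen
    rw [od_not, ind_not]
    omega
  have hin : ∀ v, ind G p g₀ v ≤ ci v := by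
    intro v
    have := no_out_violation hp' ci co hdc' hcap' g₀
      (fun g' => by rw [hPhiEq, hPhiEq]; exact hmin g') v
    rwa [od_not] at this
  refine ⟨g₀, fun v => ⟨?_, ?_⟩⟩
  · cases hpv : p v
    · have h := hin v
      have : ((G.neighborFinset v).filter fun w => g₀ s(v, w) = true) =
          ((G.neighborFinset v).filter fun w => ¬ (g₀ s(v, w) = p v)) := by
        apply filter_congr; intro w _; rw [hpv]; cases g₀ s(v, w) <;> simp
      rw [this]
      have : ci v = a := by rw [hci]; simp [hpv]
      rw [← this]
      exact h
    · have h := hout v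
      have : ((G.neighborFinset v).filter fun w => g₀ s(v, w) = true) =
          ((G.neighborFinset v).filter fun w => g₀ s(v, w) = p v) := by
        apply filter_congr; intro w _; rw [hpv]
      rw [this]
      have : co v = a := by rw [hco]; simp [hpv]
      rw [← this]
      exact h
  · cases hpv : p v
    · have h := hout v
      have : ((G.neighborFinset v).filter fun w => g₀ s(v, w) = false) =
          ((G.neighborFinset v).filter fun w => g₀ s(v, w) = p v) := by
        apply filter_congr; intro w _; rw [hpv]
      rw [this]
      have : co v = b := by rw [hco]; simp [hpv]
      rw [← this]
      exact h
    · have h := hin v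
      have : ((G.neighborFinset v).filter fun w => g₀ s(v, w) = false) =
          ((G.neighborFinset v).filter fun w => ¬ (g₀ s(v, w) = p v)) := by
        apply filter_congr; intro w _; rw [hpv]; cases g₀ s(v, w) <;> simp
      rw [this]
      have : ci v = b := by rw [hci]; simp [hpv]
      rw [← this]
      exact h


end Engine


variable {V : Type*} [Fintype V] [DecidableEq V]

theorem exists_coloring (G : SimpleGraph V) [DecidableRel G.Adj] (p : V → Bool)
    (hp : ∀ {u v : V}, G.Adj u v → p u ≠ p v) (k : ℕ)
    (hdeg : ∀ v, G.degree v ≤ 3 * k) :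
    ∃ c : Sym2 V → ℕ, G.IsImproperIntervalColoring c k := by
  classical
  -- Step 1 : find M with (deg - 2k) ≤ mdeg ≤ k, of minimum cardinality
  obtain ⟨g₁, hg₁⟩ := mainSplit (G := G) (p := p) hp k (2 * k) (fun v => by
    have := hdeg v; omega)
  set mdeg : Finset (Sym2 V) → V → ℕ :=
    fun M v => ((G.neighborFinset v).filter fun w => s(v, w) ∈ M).card with hmdeg
  set feas : Finset (Sym2 V) → Prop :=
    fun M => M ⊆ G.edgeFinset ∧ ∀ v, mdeg M v ≤ k ∧ G.degree v ≤ mdeg M v + 2 * k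
      with hfeas
  have hfeas₁ : feas (G.edgeFinset.filter fun e => g₁ e = true) := by
    constructor
    · exact filter_subset _ _
    · intro v
      have hEq : ((G.neighborFinset v).filter fun w =>
          s(v, w) ∈ G.edgeFinset.filter fun e => g₁ e = true)
          = ((G.neighborFinset v).filter fun w => g₁ s(v, w) = true) := by
        apply filter_congr
        intro w hw
        rw [SimpleGraph.mem_neighborFinset] at hw
        simp only [mem_filter, SimpleGraph.mem_edgeFinset, SimpleGraph.mem_edgeSet]
        constructor
        · rintro ⟨-, h⟩; exact h
        · intro h; exact ⟨hw, h⟩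
      have h1 := (hg₁ v).1
      have h2 := (hg₁ v).2
      have hsplit : ((G.neighborFinset v).filter fun w => g₁ s(v, w) = true).card +
          ((G.neighborFinset v).filter fun w => g₁ s(v, w) = false).card
          = G.degree v := by
        have hbase := Finset.card_filter_add_card_filter_not
          (s := G.neighborFinset v) (p := fun w => g₁ s(v, w) = true)
        have hneg : ((G.neighborFinset v).filter fun w => ¬ (g₁ s(v, w) = true))
            = ((G.neighborFinset v).filter fun w => g₁ s(v, w) = false) := by
          apply filter_congr
          intro w _
          cases g₁ s(v, w) <;> simp
        rw [hneg] at hbase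
        rw [hbase]
        exact SimpleGraph.card_neighborFinset_eq_degree G v
      rw [hmdeg]
      simp only [hEq]
      omega
  obtain ⟨M, hMfeas, hMmin⟩ := Finset.exists_min_image
    ((univ : Finset (Finset (Sym2 V))).filter feas) Finset.card
    ⟨_, mem_filter.mpr ⟨mem_univ _, hfeas₁⟩⟩
  rw [mem_filter] at hMfeas
  replace hMfeas := hMfeas.2
  have hMmin' : ∀ M', feas M' → M.card ≤ M'.card := by
    intro M' h
    exact hMmin M' (mem_filter.mpr ⟨mem_univ _, h⟩)
  have hMsub : M ⊆ G.edgeFinset := hMfeas.1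
  have hMk : ∀ v, mdeg M v ≤ k := fun v => (hMfeas.2 v).1
  have hMlow : ∀ v, G.degree v ≤ mdeg M v + 2 * k := fun v => (hMfeas.2 v).2
  -- KEY : every edge of M has an endpoint of degree ≥ 2k+1
  have hKEY : ∀ u w, G.Adj u w → s(u, w) ∈ M →
      2 * k + 1 ≤ G.degree u ∨ 2 * k + 1 ≤ G.degree w := by
    intro u w hadj hmem
    by_contra hcon
    push_neg at hcon
    obtain ⟨hu, hw⟩ := hcon
    have hfeas' : feas (M.erase s(u, w)) := by
      constructor
      · exact (erase_subset _ _).trans hMsub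
      · intro z
        have hle : mdeg (M.erase s(u, w)) z ≤ mdeg M z := by
          rw [hmdeg]
          apply card_le_card
          exact monotone_filter_right _ (fun x _ hx => mem_of_mem_erase hx)
        refine ⟨hle.trans (hMk z), ?_⟩
        by_cases hz : z = u ∨ z = w
        · rcases hz with rfl | rfl <;> omega
        · push_neg at hz
          have hfil : ((G.neighborFinset z).filter fun x => s(z, x) ∈ M.erase s(u, w))
              = ((G.neighborFinset z).filter fun x => s(z, x) ∈ M) := by
            apply filter_congr
            intro x _
            simp only [mem_erase, and_iff_right_iff_imp]
            intro hin he
            exfalso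
            have : z ∈ s(u, w) := he ▸ Sym2.mem_mk_left z x
            rcases Sym2.mem_iff.mp this with rfl | rfl
            · exact hz.1 rfl
            · exact hz.2 rfl
          have hcards : mdeg (M.erase s(u, w)) z = mdeg M z := congrArg Finset.card hfil
          rw [hcards]
          exact hMlow z
    have := hMmin' _ hfeas'
    have : (M.erase s(u, w)).card < M.card := card_erase_lt_of_mem hmem
    omega
  -- Step 2 : split the rest
  set H : SimpleGraph V := {
    Adj := fun u v => G.Adj u v ∧ s(u, v) ∉ M
    symm := by
      constructor
      intro u v ⟨h1, h2⟩
      refine ⟨h1.symm, ?_⟩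
      rwa [Sym2.eq_swap]
    loopless := ⟨fun v h => G.irrefl h.1⟩ } with hH
  letI : DecidableRel H.Adj := fun u v => instDecidableAnd
  have hHadj : ∀ {u v : V}, H.Adj u v ↔ (G.Adj u v ∧ s(u, v) ∉ M) := Iff.rfl
  have hHnbr : ∀ v, H.neighborFinset v =
      (G.neighborFinset v).filter fun w => s(v, w) ∉ M := by
    intro v
    ext w
    rw [SimpleGraph.mem_neighborFinset, mem_filter, SimpleGraph.mem_neighborFinset]
  have hHdegEq : ∀ v, mdeg M v + H.degree v = G.degree v := by
    intro v
    rw [← SimpleGraph.card_neighborFinset_eq_degree, ← SimpleGraph.card_neighborFinset_eq_degree,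
      hHnbr, hmdeg]
    exact Finset.card_filter_add_card_filter_not _
  have hpH : ∀ {u v : V}, H.Adj u v → p u ≠ p v := fun h => hp h.1
  obtain ⟨g₂, hg₂⟩ := mainSplit (G := H) (p := p) hpH k k (fun v => by
    have h1 := hHdegEq v
    have h2 := hMlow v
    omega)
  -- color-class neighbor sets (expressed in G)
  set aN : V → Finset V := fun v => (G.neighborFinset v).filter
      fun w => s(v, w) ∉ M ∧ g₂ s(v, w) = true with haN
  set bN : V → Finset V := fun v => (G.neighborFinset v).filter
      fun w => s(v, w) ∉ M ∧ g₂ s(v, w) = false with hbN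
  have haEq : ∀ v, aN v = (H.neighborFinset v).filter fun w => g₂ s(v, w) = true := by
    intro v
    rw [haN, hHnbr, filter_filter]
  have hbEq : ∀ v, bN v = (H.neighborFinset v).filter fun w => g₂ s(v, w) = false := by
    intro v
    rw [hbN, hHnbr, filter_filter]
  have hak : ∀ v, (aN v).card ≤ k := fun v => by rw [haEq]; exact (hg₂ v).1
  have hbk : ∀ v, (bN v).card ≤ k := fun v => by rw [hbEq]; exact (hg₂ v).2
  have habH : ∀ v, (aN v).card + (bN v).card = H.degree v := by
    intro v
    rw [haEq v, hbEq v, ← SimpleGraph.card_neighborFinset_eq_degree]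
    have hneg : ((H.neighborFinset v).filter fun w => ¬ (g₂ s(v, w) = true))
        = ((H.neighborFinset v).filter fun w => g₂ s(v, w) = false) := by
      apply filter_congr
      intro w _
      cases g₂ s(v, w) <;> simp
    rw [← hneg]
    exact card_filter_add_card_filter_not _
  have hfree : ∀ v, 2 * k + 1 ≤ G.degree v → 1 ≤ (aN v).card ∧ 1 ≤ (bN v).card := by
    intro v hv
    have h1 := hHdegEq v
    have h2 := hMk v
    have h3 := habH v
    have h4 := hak v
    have h5 := hbk v
    omega
  set dem : V → Prop := fun z => (aN z).card = 0 ∧ 1 ≤ (bN z).card with hdem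
  set c : Sym2 V → ℕ := fun e =>
    if e ∈ M then (if (∃ z ∈ e, dem z) then 4 else 1) else (if g₂ e then 2 else 3) with hc
  have hcases : ∀ e, (e ∈ M ∧ (∃ z ∈ e, dem z) ∧ c e = 4) ∨
      (e ∈ M ∧ ¬ (∃ z ∈ e, dem z) ∧ c e = 1) ∨
      (e ∉ M ∧ g₂ e = true ∧ c e = 2) ∨ (e ∉ M ∧ g₂ e = false ∧ c e = 3) := by
    intro e
    by_cases h1 : e ∈ M
    · by_cases h2 : ∃ z ∈ e, dem z
      · exact Or.inl ⟨h1, h2, by rw [hc]; simp only [if_pos h1, if_pos h2]⟩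
      · exact Or.inr (Or.inl ⟨h1, h2, by rw [hc]; simp only [if_pos h1, if_neg h2]⟩)
    · cases hg : g₂ e
      · exact Or.inr (Or.inr (Or.inr ⟨h1, rfl, by rw [hc]; simp only [if_neg h1, hg]; rfl⟩))
      · exact Or.inr (Or.inr (Or.inl ⟨h1, rfl, by rw [hc]; simp only [if_neg h1, hg]; rfl⟩))
  have hcval : ∀ e, c e = 1 ∨ c e = 2 ∨ c e = 3 ∨ c e = 4 := by
    intro e
    rcases hcases e with ⟨-, -, h⟩ | ⟨-, -, h⟩ | ⟨-, -, h⟩ | ⟨-, -, h⟩ <;> omega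
  have hc1 : ∀ e, c e = 1 → e ∈ M ∧ ¬ (∃ z ∈ e, dem z) := by
    intro e h
    rcases hcases e with ⟨h1, h2, h3⟩ | ⟨h1, h2, h3⟩ | ⟨h1, h2, h3⟩ | ⟨h1, h2, h3⟩ <;>
      first | (exact ⟨h1, h2⟩) | omega
  have hc4 : ∀ e, c e = 4 → e ∈ M ∧ (∃ z ∈ e, dem z) := by
    intro e h
    rcases hcases e with ⟨h1, h2, h3⟩ | ⟨h1, h2, h3⟩ | ⟨h1, h2, h3⟩ | ⟨h1, h2, h3⟩ <;>
      first | (exact ⟨h1, h2⟩) | omega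
  have hc2 : ∀ e, c e = 2 → e ∉ M ∧ g₂ e = true := by
    intro e h
    rcases hcases e with ⟨h1, h2, h3⟩ | ⟨h1, h2, h3⟩ | ⟨h1, h2, h3⟩ | ⟨h1, h2, h3⟩ <;>
      first | (exact ⟨h1, h2⟩) | omega
  have hc3 : ∀ e, c e = 3 → e ∉ M ∧ g₂ e = false := by
    intro e h
    rcases hcases e with ⟨h1, h2, h3⟩ | ⟨h1, h2, h3⟩ | ⟨h1, h2, h3⟩ | ⟨h1, h2, h3⟩ <;>
      first | (exact ⟨h1, h2⟩) | omega
  -- spectrum helpers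
  have mem2 : ∀ v, 1 ≤ (aN v).card → (2 : ℕ) ∈ G.colorSpectrum c v := by
    intro v hv
    obtain ⟨w, hw⟩ := card_pos.mp hv
    rw [haN, mem_filter, SimpleGraph.mem_neighborFinset] at hw
    refine ⟨w, hw.1, ?_⟩
    rcases hcases s(v, w) with ⟨h1, -, -⟩ | ⟨h1, -, -⟩ | ⟨-, -, h3⟩ | ⟨-, h2, -⟩
    · exact absurd h1 hw.2.1
    · exact absurd h1 hw.2.1
    · exact h3
    · rw [hw.2.2] at h2; exact absurd h2 (by simp)
  have mem3 : ∀ v, 1 ≤ (bN v).card → (3 : ℕ) ∈ G.colorSpectrum c v := by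
    intro v hv
    obtain ⟨w, hw⟩ := card_pos.mp hv
    rw [hbN, mem_filter, SimpleGraph.mem_neighborFinset] at hw
    refine ⟨w, hw.1, ?_⟩
    rcases hcases s(v, w) with ⟨h1, -, -⟩ | ⟨h1, -, -⟩ | ⟨-, h2, -⟩ | ⟨-, -, h3⟩
    · exact absurd h1 hw.2.1
    · exact absurd h1 hw.2.1
    · rw [hw.2.2] at h2; exact absurd h2 (by simp)
    · exact h3
  have key43 : ∀ v, (4 : ℕ) ∈ G.colorSpectrum c v → 1 ≤ (bN v).card := by
    rintro v ⟨w, hadj, hcw⟩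
    obtain ⟨hmem, z, hz, hdz⟩ := hc4 _ hcw
    rcases Sym2.mem_iff.mp hz with rfl | rfl
    · exact hdz.2
    · -- z = w : w is not high, so v is high
      rcases hKEY v z hadj hmem with hv | hzh
      · exact (hfree v hv).2
      · exact absurd (hfree z hzh).1 (by rw [hdem] at hdz; omega)
  have key12 : ∀ v, (1 : ℕ) ∈ G.colorSpectrum c v → 1 ≤ (bN v).card → 1 ≤ (aN v).card := by
    rintro v ⟨w, hadj, hcw⟩ hb
    obtain ⟨hmem, hnd⟩ := hc1 _ hcw
    by_contra ha
    push_neg at ha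
    exact hnd ⟨v, Sym2.mem_mk_left v w, by rw [hdem]; omega⟩
  refine ⟨c, ?_, ?_⟩
  · -- multiplicities
    intro v n
    have hset : {w | G.Adj v w ∧ c s(v, w) = n} =
        ↑((G.neighborFinset v).filter fun w => c s(v, w) = n) := by
      ext w
      simp [SimpleGraph.mem_neighborFinset]
    rw [hset, Set.ncard_coe_finset]
    have hsub1 : ∀ t : ℕ, t = 1 ∨ t = 4 →
        ((G.neighborFinset v).filter fun w => c s(v, w) = t) ⊆
          ((G.neighborFinset v).filter fun w => s(v, w) ∈ M) := by
      intro t ht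
      intro w hw
      rw [mem_filter] at hw ⊢
      refine ⟨hw.1, ?_⟩
      rcases ht with rfl | rfl
      · exact (hc1 _ hw.2).1
      · exact (hc4 _ hw.2).1
    rcases n with _ | _ | _ | _ | _ | m
    · -- n = 0
      have : ((G.neighborFinset v).filter fun w => c s(v, w) = 0) = ∅ := by
        apply filter_false_of_mem
        intro w _
        have := hcval s(v, w)
        omega
      rw [this]
      simp
    · exact le_trans (card_le_card (hsub1 1 (Or.inl rfl))) (hMk v)
    · -- n = 2 : subset of aN
      refine le_trans (card_le_card ?_) (hak v)
      intro w hw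
      rw [mem_filter] at hw
      rw [haN, mem_filter]
      exact ⟨hw.1, (hc2 _ hw.2).1, (hc2 _ hw.2).2⟩
    · refine le_trans (card_le_card ?_) (hbk v)
      intro w hw
      rw [mem_filter] at hw
      rw [hbN, mem_filter]
      exact ⟨hw.1, (hc3 _ hw.2).1, (hc3 _ hw.2).2⟩
    · exact le_trans (card_le_card (hsub1 4 (Or.inr rfl))) (hMk v)
    · have : ((G.neighborFinset v).filter fun w => c s(v, w) = m + 5) = ∅ := by
        apply filter_false_of_mem
        intro w _
        have := hcval s(v, w)
        omega
      rw [this]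
      simp
  · -- intervals
    intro v
    intro x1 hx1 x2 hx2 x hx1x hxx2
    have hvals : ∀ n ∈ G.colorSpectrum c v, n = 1 ∨ n = 2 ∨ n = 3 ∨ n = 4 := by
      rintro n ⟨w, hadj, hcw⟩
      have := hcval s(v, w)
      omega
    by_cases hxa : x = x1
    · exact hxa ▸ hx1
    by_cases hxb : x = x2
    · exact hxb ▸ hx2
    have h1v := hvals x1 hx1
    have h2v := hvals x2 hx2
    have hx23 : x = 2 ∨ x = 3 := by omega
    have hb34 : x2 = 3 ∨ x2 = 4 := by omega
    have hbcard : 1 ≤ (bN v).card := by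
      rcases hb34 with h | h
      · rw [h] at hx2
        obtain ⟨w₃, hadj, hcw⟩ := hx2
        have h3 := hc3 _ hcw
        apply card_pos.mpr
        refine ⟨w₃, ?_⟩
        rw [hbN, mem_filter, SimpleGraph.mem_neighborFinset]
        exact ⟨hadj, h3.1, h3.2⟩
      · exact key43 v (h ▸ hx2)
    rcases hx23 with rfl | rfl
    · have ha1 : x1 = 1 := by omega
      rw [ha1] at hx1
      exact mem2 v (key12 v hx1 hbcard)
    · exact mem3 v hbcard


end IntervalAux

/-- If `G` is bipartite with at least one edge, then `μ_int(G) ≤ ⌈Δ(G)/3⌉`. -/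
theorem statement9 {V : Type*} [Fintype V] (G : SimpleGraph V) [DecidableRel G.Adj]
    (hbip : G.Colorable 2) (hE : G.edgeSet.Nonempty) :
    G.muInt ≤ (G.maxDegree + 2) / 3 := by
  classical
  letI : DecidableEq V := Classical.decEq V
  obtain ⟨C⟩ := hbip
  set p : V → Bool := fun v => decide (C v = 0) with hpdef
  have hfin : ∀ i j : Fin 2, i ≠ j → decide (i = 0) ≠ decide (j = 0) := by decide
  have hp : ∀ {u v : V}, G.Adj u v → p u ≠ p v := by
    intro u v huv
    exact hfin _ _ (C.valid huv)
  set k := (G.maxDegree + 2) / 3 with hk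
  have hdeg : ∀ v, G.degree v ≤ 3 * k := by
    intro v
    have h1 := G.degree_le_maxDegree v
    have h2 := Nat.div_add_mod (G.maxDegree + 2) 3
    have h3 : (G.maxDegree + 2) % 3 < 3 := Nat.mod_lt _ (by norm_num)
    omega
  obtain ⟨c, hcol⟩ := IntervalAux.exists_coloring G p hp k hdeg
  exact Nat.sInf_le ⟨c, hcol⟩
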